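/- Let M be an A-module satisfying (I1)–(I4). Then for each x ∈ X there exists a unique element M_x ∈ M with M̄_x = M_x and M_x ≡ m_x mod M_{<0}. Moreover M_x ≡ m_x mod ⊕_{y<x} A_{<0} m_y, and the family (M_x)_{x∈X} is an A-basis of M. -/

import Mathlib

open scoped Classical

noncomputable section

namespace CellsCacti

/-- The group algebra `A = ℤ[𝔄]` of a totally ordered abelian group `𝔄`,
written exponentially: `A = ⊕_{a ∈ 𝔄} ℤ vᵃ`. -/
abbrev GA (𝔄 : Type*) [AddCommGroup 𝔄] [LinearOrder 𝔄] [IsOrderedAddMonoid 𝔄] := AddMonoidAlgebra ℤ 𝔄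

variable {𝔄 : Type*} [AddCommGroup 𝔄] [LinearOrder 𝔄] [IsOrderedAddMonoid 𝔄]

/-- The element `vᵃ` of `A = ℤ[𝔄]`. -/
def v (a : 𝔄) : GA 𝔄 := AddMonoidAlgebra.single a 1

/-- The bar involution of `A = ℤ[𝔄]`, determined by `vᵃ ↦ v⁻ᵃ`. -/
def Abar : GA 𝔄 ≃ₐ[ℤ] GA 𝔄 := AddMonoidAlgebra.domCongr ℤ ℤ (AddEquiv.neg 𝔄)

/-- `A_{<0} = ⊕_{a < 0} ℤ vᵃ`, as a predicate on elements of `A`. -/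
def Aneg (a : GA 𝔄) : Prop := ∀ γ ∈ a.coeff.support, γ < (0 : 𝔄)

lemma Abar_apply (a : GA 𝔄) (γ : 𝔄) : (Abar a).coeff γ = a.coeff (-γ) := by
  rw [Abar, AddMonoidAlgebra.coeff_domCongr]; rfl

lemma Abar_Abar (a : GA 𝔄) : Abar (Abar a) = a := by
  ext γ; simp [Abar_apply]

lemma Aneg_zero : Aneg (0 : GA 𝔄) := by
  intro γ hγ; simp at hγ

lemma Aneg.add {a b : GA 𝔄} (ha : Aneg a) (hb : Aneg b) : Aneg (a + b) := by
  intro γ hγ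
  rw [AddMonoidAlgebra.coeff_add] at hγ
  rcases Finset.mem_union.mp (Finsupp.support_add hγ) with h | h
  · exact ha γ h
  · exact hb γ h

lemma Aneg.neg {a : GA 𝔄} (ha : Aneg a) : Aneg (-a) := by
  intro γ hγ
  rw [AddMonoidAlgebra.coeff_neg, Finsupp.support_neg] at hγ
  exact ha γ hγ

lemma Aneg.sub {a b : GA 𝔄} (ha : Aneg a) (hb : Aneg b) : Aneg (a - b) := by
  rw [sub_eq_add_neg]; exact ha.add hb.neg

lemma Aneg.mul {a b : GA 𝔄} (ha : Aneg a) (hb : Aneg b) : Aneg (a * b) := by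
  intro γ hγ
  have := AddMonoidAlgebra.support_coeff_mul_subset a b hγ
  rcases Finset.mem_add.mp this with ⟨α, hα, β, hβ, rfl⟩
  exact add_neg (ha α hα) (hb β hβ)

lemma Aneg_sum {ι : Type*} (s : Finset ι) (f : ι → GA 𝔄) (h : ∀ i ∈ s, Aneg (f i)) :
    Aneg (∑ i ∈ s, f i) := by
  classical
  induction s using Finset.induction_on with
  | empty => simpa using Aneg_zero
  | insert _ _ hni ih =>
    rw [Finset.sum_insert hni]
    exact (h _ (Finset.mem_insert_self _ _)).add
      (ih fun i hi => h i (Finset.mem_insert_of_mem hi))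

lemma Aneg.eq_zero_of_bar {a : GA 𝔄} (ha : Aneg a) (h : Abar a = a) : a = 0 := by
  by_contra hne
  obtain ⟨γ, hγ⟩ := Finsupp.support_nonempty_iff.mpr (AddMonoidAlgebra.coeff_eq_zero.not.mpr hne)
  have h1 : γ < 0 := ha γ hγ
  have h2 : a.coeff (-γ) ≠ 0 := by
    have := congrArg (fun q => q.coeff γ) h
    simp only [Abar_apply] at this
    rw [this]; exact Finsupp.mem_support_iff.mp hγ
  have h3 := ha (-γ) (Finsupp.mem_support_iff.mpr h2)
  exact (neg_pos.mpr h1).not_gt h3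

lemma skew_split {a : GA 𝔄} (h : Abar a = -a) :
    ∃ p : GA 𝔄, Aneg p ∧ a = p - Abar p := by
  set p : GA 𝔄 := AddMonoidAlgebra.ofCoeff (Finsupp.filter (fun γ => γ < (0:𝔄)) a.coeff : 𝔄 →₀ ℤ) with hp
  have happ : ∀ γ : 𝔄, p.coeff γ = if γ < 0 then a.coeff γ else 0 := fun γ => Finsupp.filter_apply _ _ γ
  refine ⟨p, ?_, ?_⟩
  · intro γ hγ
    by_contra hlt
    have := Finsupp.mem_support_iff.mp hγ
    rw [happ γ, if_neg hlt] at this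
    exact this rfl
  · ext γ
    have hskew : ∀ δ : 𝔄, a.coeff (-δ) = -(a.coeff δ) := by
      intro δ
      have := congrArg (fun q => q.coeff δ) h
      simpa [Abar_apply, AddMonoidAlgebra.coeff_neg] using this
    have hsub : (p - Abar p).coeff γ = p.coeff γ - p.coeff (-γ) := by
      rw [AddMonoidAlgebra.coeff_sub, Finsupp.sub_apply, Abar_apply]
    rw [hsub, happ γ, happ (-γ)]
    rcases lt_trichotomy γ 0 with hγ | hγ | hγ
    · rw [if_pos hγ, if_neg (by simp [not_lt, le_of_lt hγ])]
      ring
    · subst hγ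
      have h0 : a.coeff 0 = -(a.coeff 0) := by simpa using hskew 0
      have : a.coeff 0 = 0 := by omega
      simp [this]
    · rw [if_neg (not_lt.mpr (le_of_lt hγ)), if_pos (by simpa using hγ), hskew γ]
      ring


/-- The setting of Section 2 of "Cells and cacti": an `A`-module `M` with an `A`-basis
`(m_x)_{x ∈ X}` indexed by a poset `X` (hypothesis (I1)), endowed with a `bar`-semilinear
involution (hypothesis (I2)) satisfying the triangularity condition (I3), such that lower
intervals of `X` are finite (hypothesis (I4)). -/
structure BarModule (𝔄 : Type*) [AddCommGroup 𝔄] [LinearOrder 𝔄] [IsOrderedAddMonoid 𝔄] (X : Type*) [PartialOrder X]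
    (Mod : Type*) [AddCommGroup Mod] [Module (GA 𝔄) Mod] where
  /-- (I1): the `A`-basis `(m_x)_{x ∈ X}` of `M`. -/
  m : Module.Basis X (GA 𝔄) Mod
  /-- (I2): a semilinear involution of `M` (additivity). -/
  bar : Mod →+ Mod
  /-- (I2): semilinearity of the involution with respect to the bar involution of `A`. -/
  bar_smul : ∀ (a : GA 𝔄) (x : Mod), bar (a • x) = Abar a • bar x
  /-- (I2): `bar` is an involution. -/
  bar_invol : ∀ x : Mod, bar (bar x) = x
  /-- (I3): `bar m_x ≡ m_x` modulo `⊕_{y < x} A m_y`. -/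
  I3 : ∀ x : X, bar (m x) - m x ∈ Submodule.span (GA 𝔄) (m '' {y | y < x})
  /-- (I4): the set `{y | y ≤ x}` is finite. -/
  I4 : ∀ x : X, {y | y ≤ x}.Finite

variable {X : Type*} [PartialOrder X] {Mod : Type*} [AddCommGroup Mod] [Module (GA 𝔄) Mod]

/-- `M_{<0} = ⊕_{x ∈ X} A_{<0} m_x`. -/
def BarModule.Mneg (S : BarModule 𝔄 X Mod) : Set Mod :=
  {u | ∀ x : X, Aneg (S.m.repr u x)}

/-- `M_skew = {m ∈ M | m + bar m = 0}`. -/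
def BarModule.Mskew (S : BarModule 𝔄 X Mod) : Set Mod :=
  {u | u + S.bar u = 0}

/-- Well-foundedness of `<` on `X`, from (I4). -/
lemma BarModule.wf (S : BarModule 𝔄 X Mod) : WellFounded ((· < ·) : X → X → Prop) := by
  have key : ∀ n : ℕ, ∀ x : X, (S.I4 x).toFinset.card ≤ n → Acc ((· < ·) : X → X → Prop) x := by
    intro n
    induction n with
    | zero =>
      intro x hx
      exfalso
      have : x ∈ (S.I4 x).toFinset := by simp
      have := Finset.card_pos.mpr ⟨x, this⟩
      omega
    | succ n ih =>
      intro x hx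
      refine Acc.intro x fun y hy => ih y ?_
      have hsub : (S.I4 y).toFinset ⊆ (S.I4 x).toFinset.erase x := by
        intro z hz
        simp only [Set.Finite.mem_toFinset, Set.mem_setOf_eq] at hz ⊢
        refine Finset.mem_erase.mpr ⟨?_, by simp [Set.Finite.mem_toFinset]; exact hz.trans hy.le⟩
        rintro rfl
        exact absurd (hz.trans_lt hy) (lt_irrefl _)
      have := Finset.card_le_card hsub
      have := Finset.card_erase_le (a := x) (s := (S.I4 x).toFinset)
      have hxmem : x ∈ (S.I4 x).toFinset := by simp
      have := Finset.card_erase_of_mem hxmem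
      omega
  exact ⟨fun x => key _ x le_rfl⟩

/-- A "good" family: unitriangular with respect to the basis `m`. -/
def BarModule.IsGood (S : BarModule 𝔄 X Mod) (G : X → Mod) : Prop :=
  ∀ y : X, S.m.repr (G y) y = 1 ∧ ∀ z : X, S.m.repr (G y) z ≠ 0 → z ≤ y

lemma BarModule.repr_lc (S : BarModule 𝔄 X Mod) {G : X → Mod} (hG : S.IsGood G)
    (f : X →₀ GA 𝔄) {y : X} (hy : ∀ z ∈ f.support, ¬ y < z) :
    S.m.repr (Finsupp.linearCombination (GA 𝔄) G f) y = f y := by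
  rw [Finsupp.linearCombination_apply, Finsupp.sum, map_sum, Finsupp.finset_sum_apply]
  have hterm : ∀ z : X, (S.m.repr (f z • G z)) y = f z * (S.m.repr (G z)) y := by
    intro z; rw [map_smul]; rfl
  rw [Finset.sum_congr rfl fun z _ => hterm z]
  have hs : ∑ z ∈ f.support, f z * (S.m.repr (G z)) y = f y * (S.m.repr (G y)) y := by
    apply Finset.sum_eq_single y
    · intro z hz hzy
      have : S.m.repr (G z) y = 0 := by
        by_contra hne
        exact hy z hz (lt_of_le_of_ne ((hG z).2 y hne) (Ne.symm hzy))
      rw [this, mul_zero]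
    · intro hyn
      rw [Finsupp.notMem_support_iff.mp hyn, zero_mul]
  rw [hs, (hG y).1, mul_one]

lemma BarModule.lc_eq_zero (S : BarModule 𝔄 X Mod) {G : X → Mod} (hG : S.IsGood G)
    (f : X →₀ GA 𝔄) (h : Finsupp.linearCombination (GA 𝔄) G f = 0) : f = 0 := by
  by_contra hne
  obtain ⟨y, hy, hmax'⟩ := Finset.exists_maximal (Finsupp.support_nonempty_iff.mpr hne)
  have hmax : ∀ z ∈ f.support, ¬ y < z := fun z hz hlt => hlt.not_ge (hmax' hz hlt.le)
  have hr := S.repr_lc hG f (fun z hz => hmax z hz)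
  rw [h, map_zero] at hr
  exact Finsupp.mem_support_iff.mp hy (by simpa using hr.symm)

lemma BarModule.good_barm (S : BarModule 𝔄 X Mod) : S.IsGood (fun y => S.bar (S.m y)) := by
  intro y
  have hsupp : ↑(S.m.repr (S.bar (S.m y) - S.m y)).support ⊆ {z | z < y} :=
    (Module.Basis.mem_span_image _).mp (S.I3 y)
  have key : ∀ z, S.m.repr (S.bar (S.m y)) z
      = Finsupp.single y (1 : GA 𝔄) z + S.m.repr (S.bar (S.m y) - S.m y) z := by
    intro z
    conv_lhs => rw [show S.bar (S.m y) = S.m y + (S.bar (S.m y) - S.m y) by abel]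
    rw [map_add, Finsupp.add_apply, Module.Basis.repr_self]
  have hdiff_y : S.m.repr (S.bar (S.m y) - S.m y) y = 0 := by
    by_contra hne
    exact absurd (hsupp (Finsupp.mem_support_iff.mpr hne)) (lt_irrefl y)
  constructor
  · rw [key y, hdiff_y, Finsupp.single_eq_same, add_zero]
  · intro z hz
    rw [key z] at hz
    by_cases hzy : z = y
    · exact le_of_eq hzy
    · rw [Finsupp.single_eq_of_ne hzy, zero_add] at hz
      exact (hsupp (Finsupp.mem_support_iff.mpr hz)).le

lemma BarModule.bar_lc (S : BarModule 𝔄 X Mod) (f : X →₀ GA 𝔄) (G : X → Mod) :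
    S.bar (Finsupp.linearCombination (GA 𝔄) G f)
      = Finsupp.linearCombination (GA 𝔄) (fun z => S.bar (G z))
          (f.mapRange (fun q => Abar q) (map_zero _)) := by
  rw [Finsupp.linearCombination_apply, Finsupp.linearCombination_apply,
    Finsupp.sum_mapRange_index (by simp), Finsupp.sum, Finsupp.sum, map_sum]
  exact Finset.sum_congr rfl fun z _ => S.bar_smul _ _

lemma BarModule.eq_zero_of_fixed_neg (S : BarModule 𝔄 X Mod) {N : Mod} (h1 : S.bar N = N)
    (h2 : ∀ x : X, Aneg (S.m.repr N x)) : N = 0 := by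
  by_contra hne
  have hc : S.m.repr N ≠ 0 := by
    intro h
    exact hne (by simpa using congrArg S.m.repr.symm h)
  obtain ⟨y, hy, hmax'⟩ := Finset.exists_maximal (Finsupp.support_nonempty_iff.mpr hc)
  have hmax : ∀ z ∈ (S.m.repr N).support, ¬ y < z := fun z hz hlt => hlt.not_ge (hmax' hz hlt.le)
  have hN : Finsupp.linearCombination (GA 𝔄) (⇑S.m) (S.m.repr N) = N :=
    Module.Basis.linearCombination_repr _ _
  have hbar : S.bar N = Finsupp.linearCombination (GA 𝔄) (fun z => S.bar (S.m z))
      ((S.m.repr N).mapRange (fun q => Abar q) (map_zero _)) := by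
    conv_lhs => rw [← hN]
    exact S.bar_lc _ _
  have hy2 : ∀ z ∈ ((S.m.repr N).mapRange (fun q => Abar q) (map_zero _)).support, ¬ y < z :=
    fun z hz => hmax z (Finsupp.support_mapRange hz)
  have hr := S.repr_lc S.good_barm _ hy2
  rw [← hbar, h1] at hr
  have heq : S.m.repr N y = Abar (S.m.repr N y) := by
    simpa [Finsupp.mapRange_apply] using hr
  exact Finsupp.mem_support_iff.mp hy ((h2 y).eq_zero_of_bar heq.symm)

lemma BarModule.m_mem_span (S : BarModule 𝔄 X Mod) {G : X → Mod} (hG : S.IsGood G) (x : X) :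
    S.m x ∈ Submodule.span (GA 𝔄) (G '' {y | y ≤ x}) := by
  refine S.wf.induction
    (C := fun x => S.m x ∈ Submodule.span (GA 𝔄) (G '' {y | y ≤ x})) x ?_
  intro x IH
  classical
  have hGx : G x = ∑ z ∈ (S.m.repr (G x)).support, (S.m.repr (G x)) z • S.m z := by
    conv_lhs => rw [← Module.Basis.linearCombination_repr S.m (G x)]
    rw [Finsupp.linearCombination_apply, Finsupp.sum]
  have hxs : x ∈ (S.m.repr (G x)).support :=
    Finsupp.mem_support_iff.mpr (by rw [(hG x).1]; exact one_ne_zero)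
  have hsplit : G x = S.m x + ∑ z ∈ (S.m.repr (G x)).support.erase x,
      (S.m.repr (G x)) z • S.m z := by
    refine hGx.trans ((Finset.add_sum_erase _ _ hxs).symm.trans ?_)
    rw [(hG x).1, one_smul]
  have hmx : S.m x = G x - ∑ z ∈ (S.m.repr (G x)).support.erase x,
      (S.m.repr (G x)) z • S.m z :=
    eq_sub_iff_add_eq.mpr hsplit.symm
  rw [hmx]
  refine Submodule.sub_mem _ (Submodule.subset_span ⟨x, le_refl x, rfl⟩)
    (Submodule.sum_mem _ ?_)
  intro z hz
  have hzx : z < x := lt_of_le_of_ne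
    ((hG x).2 z (Finsupp.mem_support_iff.mp (Finset.mem_of_mem_erase hz)))
    (Finset.ne_of_mem_erase hz)
  refine Submodule.smul_mem _ _ (Submodule.span_mono ?_ (IH z hzx))
  exact Set.image_mono (fun w hw => le_trans hw hzx.le)

def BarModule.KL (S : BarModule 𝔄 X Mod) (x : X) (N : Mod) : Prop :=
  S.bar N = N ∧ ∀ y : X, Aneg (S.m.repr (N - S.m x) y) ∧
    (S.m.repr (N - S.m x) y ≠ 0 → y < x)

lemma BarModule.exists_KL (S : BarModule 𝔄 X Mod) : ∀ x : X, ∃ N : Mod, S.KL x N := by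
  intro x
  refine S.wf.induction (C := fun x => ∃ N, S.KL x N) x ?_
  clear x; intro x IH
  choose Nf hNf using IH
  classical
  set G : X → Mod := fun y => if h : y < x then Nf y h else S.m y with hGdef
  have hGbar : ∀ y, y < x → S.bar (G y) = G y := by
    intro y h; simp only [hGdef, dif_pos h]; exact (hNf y h).1
  have hGrepr : ∀ y z : X, S.m.repr (G y) z
      = Finsupp.single y (1 : GA 𝔄) z + S.m.repr (G y - S.m y) z := by
    intro y z
    conv_lhs => rw [show G y = S.m y + (G y - S.m y) by abel]
    rw [map_add, Finsupp.add_apply, Module.Basis.repr_self]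
  have hGcoef : ∀ y, y < x → ∀ z : X, Aneg (S.m.repr (G y - S.m y) z)
      ∧ (S.m.repr (G y - S.m y) z ≠ 0 → z < y) := by
    intro y h z
    simp only [hGdef, dif_pos h]
    exact (hNf y h).2 z
  have hGdiag0 : ∀ y : X, S.m.repr (G y - S.m y) y = 0 := by
    intro y
    by_cases h : y < x
    · by_contra hne; exact absurd ((hGcoef y h y).2 hne) (lt_irrefl y)
    · simp only [hGdef, dif_neg h]; simp
  have hG : S.IsGood G := by
    intro y
    constructor
    · rw [hGrepr y y, hGdiag0 y, Finsupp.single_eq_same, add_zero]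
    · intro z hz
      rw [hGrepr y z] at hz
      by_cases hzy : z = y
      · exact le_of_eq hzy
      · rw [Finsupp.single_eq_of_ne hzy, zero_add] at hz
        by_cases h : y < x
        · exact ((hGcoef y h z).2 hz).le
        · exfalso; revert hz; simp only [hGdef, dif_neg h]; simp
  set D : Mod := S.bar (S.m x) - S.m x with hD
  have hDskew : S.bar D = -D := by
    rw [hD, map_sub, S.bar_invol]; abel
  have hDspan : D ∈ Submodule.span (GA 𝔄) (G '' {y | y < x}) := by
    refine Submodule.span_le.mpr ?_ (S.I3 x)
    rintro u ⟨w, hw, rfl⟩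
    refine Submodule.span_mono (Set.image_mono ?_) (S.m_mem_span hG w)
    intro z hz; exact lt_of_le_of_lt hz hw
  obtain ⟨l, hl1, hl2⟩ := (Finsupp.mem_span_image_iff_linearCombination (GA 𝔄)).mp hDspan
  have hlsupp : ∀ z ∈ l.support, z < x := fun z hz => (Finsupp.mem_supported (GA 𝔄) l).mp hl1 hz
  -- skewness of the coefficients l
  have hswap : Finsupp.linearCombination (GA 𝔄) (fun z => S.bar (G z))
      (l.mapRange (fun q => Abar q) (map_zero _))
      = Finsupp.linearCombination (GA 𝔄) G (l.mapRange (fun q => Abar q) (map_zero _)) := by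
    rw [Finsupp.linearCombination_apply, Finsupp.linearCombination_apply,
      Finsupp.sum, Finsupp.sum]
    refine Finset.sum_congr rfl fun z hz => ?_
    rw [hGbar z (hlsupp z (Finsupp.support_mapRange hz))]
  have hzero : l.mapRange (fun q => Abar q) (map_zero _) + l = 0 := by
    refine S.lc_eq_zero hG _ ?_
    rw [map_add, ← hswap, ← S.bar_lc, hl2, hDskew]
    abel
  have hskew : ∀ y : X, Abar (l y) = -(l y) := by
    intro y
    have := congrArg (fun f : X →₀ GA 𝔄 => f y) hzero
    simp only [Finsupp.add_apply, Finsupp.mapRange_apply, Finsupp.zero_apply] at this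
    exact eq_neg_of_add_eq_zero_left this
  have hp : ∀ y : X, ∃ p : GA 𝔄, Aneg p ∧ l y = p - Abar p := fun y => skew_split (hskew y)
  choose p hp1 hp2 using hp
  set N : Mod := S.m x + ∑ y ∈ l.support, p y • G y with hNdef
  have hDsum : D = ∑ y ∈ l.support, (l y) • G y := by
    rw [← hl2, Finsupp.linearCombination_apply, Finsupp.sum]
  have hbmx : S.bar (S.m x) = S.m x + D := by rw [hD]; abel
  have hbarN : S.bar N = N := by
    have key : ∀ y ∈ l.support, (l y) • G y + Abar (p y) • G y = p y • G y := by
      intro y hy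
      rw [hp2 y, sub_smul]; abel
    calc S.bar N = S.m x + ((∑ y ∈ l.support, l y • G y)
          + ∑ y ∈ l.support, Abar (p y) • G y) := by
          rw [hNdef, map_add, map_sum,
            Finset.sum_congr rfl (fun y hy => by rw [S.bar_smul, hGbar y (hlsupp y hy)]),
            hbmx, hDsum]
          abel
      _ = S.m x + ∑ y ∈ l.support, (l y • G y + Abar (p y) • G y) := by
          rw [Finset.sum_add_distrib]
      _ = S.m x + ∑ y ∈ l.support, p y • G y := by
          rw [Finset.sum_congr rfl key]
      _ = N := rfl
  have hNsub : N - S.m x = ∑ z ∈ l.support, p z • G z := by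
    rw [hNdef]; abel
  have hreprN : ∀ y : X, S.m.repr (N - S.m x) y
      = ∑ z ∈ l.support, p z * S.m.repr (G z) y := by
    intro y
    rw [hNsub, map_sum, Finsupp.finset_sum_apply]
    refine Finset.sum_congr rfl fun z _ => ?_
    rw [map_smul]; rfl
  refine ⟨N, hbarN, fun y => ⟨?_, ?_⟩⟩
  · rw [hreprN y]
    refine Aneg_sum _ _ fun z hz => ?_
    by_cases hyz : y = z
    · subst hyz
      rw [(hG y).1, mul_one]
      exact hp1 y
    · have : S.m.repr (G z) y = S.m.repr (G z - S.m z) y := by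
        rw [hGrepr z y, Finsupp.single_eq_of_ne hyz, zero_add]
      rw [this]
      exact (hp1 z).mul ((hGcoef z (hlsupp z hz) y).1)
  · intro hne
    by_contra hylt
    refine hne ?_
    rw [hreprN y]
    refine Finset.sum_eq_zero fun z hz => ?_
    have h0 : S.m.repr (G z) y = 0 := by
      by_contra hne'
      exact hylt (lt_of_le_of_lt ((hG z).2 y hne') (hlsupp z hz))
    rw [h0, mul_zero]

/-- **Corollary 2.5** (cells and cacti): for each `x ∈ X` there is a unique `M_x ∈ M` with
`bar M_x = M_x` and `M_x ≡ m_x mod M_{<0}`; moreover `M_x ≡ m_x mod ⊕_{y < x} A_{<0} m_y`,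
and the family `(M_x)_{x ∈ X}` is an `A`-basis of `M`. -/
theorem coro_kl_general (S : BarModule 𝔄 X Mod) :
    ∃ Mfam : X → Mod,
      (∀ x : X, S.bar (Mfam x) = Mfam x ∧ Mfam x - S.m x ∈ S.Mneg) ∧
      (∀ x : X, ∀ N : Mod, S.bar N = N → N - S.m x ∈ S.Mneg → N = Mfam x) ∧
      (∀ x : X, ∀ y : X, Aneg (S.m.repr (Mfam x - S.m x) y) ∧
        (S.m.repr (Mfam x - S.m x) y ≠ 0 → y < x)) ∧
      (∃ b : Module.Basis X (GA 𝔄) Mod, ∀ x : X, b x = Mfam x) := by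
  choose Mfam hM using S.exists_KL
  have hgood : S.IsGood Mfam := by
    intro y
    have h2 := (hM y).2
    have hrepr : ∀ z : X, S.m.repr (Mfam y) z
        = Finsupp.single y (1 : GA 𝔄) z + S.m.repr (Mfam y - S.m y) z := by
      intro z
      conv_lhs => rw [show Mfam y = S.m y + (Mfam y - S.m y) by abel]
      rw [map_add, Finsupp.add_apply, Module.Basis.repr_self]
    constructor
    · have h0 : S.m.repr (Mfam y - S.m y) y = 0 := by
        by_contra hne; exact absurd ((h2 y).2 hne) (lt_irrefl _)
      rw [hrepr y, h0, Finsupp.single_eq_same, add_zero]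
    · intro z hz
      rw [hrepr z] at hz
      by_cases hzy : z = y
      · exact le_of_eq hzy
      · rw [Finsupp.single_eq_of_ne hzy, zero_add] at hz
        exact ((h2 z).2 hz).le
  refine ⟨Mfam, ?_, ?_, ?_, ?_⟩
  · exact fun x => ⟨(hM x).1, fun y => ((hM x).2 y).1⟩
  · intro x N hbar hneg
    have hd : S.bar (N - Mfam x) = N - Mfam x := by
      rw [map_sub, hbar, (hM x).1]
    have hneg' : ∀ y : X, Aneg (S.m.repr (N - Mfam x) y) := by
      intro y
      have heq : N - Mfam x = (N - S.m x) - (Mfam x - S.m x) := by abel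
      rw [heq, map_sub, Finsupp.sub_apply]
      exact (hneg y).sub ((hM x).2 y).1
    exact sub_eq_zero.mp (S.eq_zero_of_fixed_neg hd hneg')
  · exact fun x y => (hM x).2 y
  · have hli : LinearIndependent (GA 𝔄) Mfam :=
      linearIndependent_iff.mpr fun l hl => S.lc_eq_zero hgood l hl
    have hsp : ⊤ ≤ Submodule.span (GA 𝔄) (Set.range Mfam) := by
      rw [← S.m.span_eq]
      refine Submodule.span_le.mpr ?_
      rintro u ⟨w, rfl⟩
      exact Submodule.span_mono (Set.image_subset_range _ _) (S.m_mem_span hgood w)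
    exact ⟨Module.Basis.mk hli hsp, fun x => Module.Basis.mk_apply _ _ _⟩


end CellsCacti
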